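/- Let G be a graph with a tree-decomposition (T, 𝒳) of width t and maximum degree at most d, and let H be a graph on a vertex set containing V(G) such that every vertex of H − V(G) is adjacent (in H) only to vertices of G, and every edge of H is contained in the closed neighborhood (in H) of some vertex of G. If each vertex of G has at most d neighbors in H outside V(G) and H restricted to V(G) has no edges outside those induced by G's adjacency via these subdivision vertices, then replacing each bag B of 𝒳 by the union of the closed H-neighborhoods of the vertices of B yields a tree-decomposition of H. In particular, if G has treewidth at most t and maximum degree at most d, the graph M(G) obtained by subdividing every edge of G twice has treewidth at most (t+1)(2d+1) − 1. -/

import Mathlib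

open SimpleGraph

namespace TDAux

variable {ι : Type*} {T : SimpleGraph ι}

/-- Reachability inside an induced subgraph from a walk whose support stays in the set. -/
lemma reach_of_walk {A : Set ι} {a b : ι} (w : T.Walk a b)
    (hw : ∀ x ∈ w.support, x ∈ A) (ha : a ∈ A) (hb : b ∈ A) :
    (T.induce A).Reachable ⟨a, ha⟩ ⟨b, hb⟩ := by
  have hsub : {v | v ∈ w.support} ⊆ A := fun x hx => hw x hx
  have h := (w.connected_induce_support).preconnected
    ⟨a, w.start_mem_support⟩ ⟨b, w.end_mem_support⟩
  exact h.map (T.induceHomOfLE hsub).toHom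

/-- A walk in an induced subgraph yields a walk in the big graph with support in the set. -/
lemma exists_walk_of_induce {A : Set ι} {a b : ι} (ha : a ∈ A) (hb : b ∈ A)
    (h : (T.induce A).Reachable ⟨a, ha⟩ ⟨b, hb⟩) :
    ∃ w : T.Walk a b, ∀ x ∈ w.support, x ∈ A := by
  obtain ⟨w⟩ := h
  refine ⟨w.map (SimpleGraph.Embedding.induce A).toHom, ?_⟩
  intro x hx
  replace hx : x ∈ (w.map (SimpleGraph.Embedding.induce A).toHom).support := hx
  rw [SimpleGraph.Walk.support_map] at hx
  obtain ⟨⟨y, hy⟩, _, rfl⟩ := List.mem_map.mp hx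
  exact hy

/-- In an acyclic graph, the intersection of two connected induced sets is connected
(once nonempty). -/
lemma subtree_inter (hT : T.IsAcyclic) {A B : Set ι}
    (hA : (T.induce A).Connected) (hB : (T.induce B).Connected)
    (hne : (A ∩ B).Nonempty) : (T.induce (A ∩ B)).Connected := by
  classical
  obtain ⟨x0, hx0⟩ := hne
  apply T.induce_connected_of_patches x0 hx0
  intro y hy
  refine ⟨A ∩ B, le_refl _, hx0, hy, ?_⟩
  obtain ⟨wA, hwA⟩ := exists_walk_of_induce hx0.1 hy.1 (hA.preconnected _ _)
  obtain ⟨wB, hwB⟩ := exists_walk_of_induce hx0.2 hy.2 (hB.preconnected _ _)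
  have hpq : wA.toPath = wB.toPath := hT.path_unique _ _
  have hsupA : ∀ x ∈ (wA.toPath : T.Walk x0 y).support, x ∈ A := fun x hx =>
    hwA x (SimpleGraph.Walk.support_bypass_subset _ hx)
  have hsupB : ∀ x ∈ (wB.toPath : T.Walk x0 y).support, x ∈ B := fun x hx =>
    hwB x (SimpleGraph.Walk.support_bypass_subset _ hx)
  refine reach_of_walk (wA.toPath : T.Walk x0 y) ?_ hx0 hy
  intro x hx
  exact ⟨hsupA x hx, hsupB x (hpq ▸ hx)⟩

lemma induce_acyclic (hT : T.IsAcyclic) (A : Set ι) : (T.induce A).IsAcyclic := by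
  intro v c hc
  exact hT _ (hc.map (f := (SimpleGraph.Embedding.induce A (G := T)).toHom)
    (SimpleGraph.Embedding.induce A (G := T)).injective)

lemma induce_singleton_connected (k : ι) : (T.induce {k}).Connected := by
  haveI : Nonempty (Set.singleton k) := ⟨⟨k, rfl⟩⟩
  constructor
  rintro ⟨a, ha⟩ ⟨b, hb⟩
  obtain rfl : a = k := Set.mem_singleton_iff.mp ha
  obtain rfl : b = a := Set.mem_singleton_iff.mp hb
  rfl

/-- If `a` has a unique neighbour, no cycle passes through `a`. -/
lemma no_cycle_of_unique_nbr {α : Type*} {K : SimpleGraph α} {a b : α}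
    (hu : ∀ x, K.Adj a x → x = b) (c : K.Walk a a) : ¬ c.IsCycle := by
  intro hc
  cases c with
  | nil => exact hc.ne_nil rfl
  | @cons _ x _ h q =>
    rw [SimpleGraph.Walk.cons_isCycle_iff] at hc
    obtain ⟨hq, he⟩ := hc
    have hx : x = b := hu _ h
    subst hx
    have hqnn : q.darts ≠ [] := by
      intro hnil
      have : q.length = 0 := by
        have := congrArg List.length hnil
        simpa [SimpleGraph.Walk.length_darts] using this
      exact h.ne' (by simpa [SimpleGraph.Walk.nil_iff_length_eq] using
        (SimpleGraph.Walk.nil_iff_length_eq.mpr this).eq)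
    set dl := q.darts.getLast hqnn with hdl
    have hsnd : dl.snd = a := by rw [hdl, SimpleGraph.Walk.getLast_darts_eq_lastDart]; rfl
    have hadj : K.Adj dl.fst dl.snd := dl.adj
    have hfst : dl.fst = x := hu _ (by rw [hsnd] at hadj; exact hadj.symm)
    have hmem : dl ∈ q.darts := List.getLast_mem hqnn
    have : dl.edge ∈ q.edges := List.mem_map_of_mem hmem
    have h2 : s(dl.fst, dl.snd) ∈ q.edges := by
      simpa [SimpleGraph.Dart.edge] using this
    rw [hfst, hsnd] at h2
    rw [Sym2.eq_swap] at h2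
    exact he h2

variable {α β : Type*} (T' : SimpleGraph α) (r : α)

/-- Attach every element of `β` as a leaf at `r`. -/
def starAttach : SimpleGraph (α ⊕ β) where
  Adj a b :=
    match a, b with
    | .inl s, .inl s' => T'.Adj s s'
    | .inl s, .inr _ => s = r
    | .inr _, .inl s => s = r
    | .inr _, .inr _ => False
  symm := by
    constructor
    rintro (s | s) (u | u) h
    · exact h.symm
    · exact h
    · exact h
    · exact h.elim
  loopless := by
    constructor
    rintro (s | s) h
    · exact T'.irrefl h
    · exact h

variable {T' r}

lemma starAttach_inl_adj {s s' : α} :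
    (starAttach (β := β) T' r).Adj (Sum.inl s) (Sum.inl s') ↔ T'.Adj s s' := Iff.rfl

/-- The homomorphism from `T'` into the star attachment. -/
def starHom : T' →g starAttach (β := β) T' r where
  toFun := Sum.inl
  map_rel' := fun h => h

lemma starHom_injective : Function.Injective (starHom (T' := T') (r := r) (β := β)) :=
  Sum.inl_injective

lemma starAttach_lift {p q : α ⊕ β} (w : (starAttach (β := β) T' r).Walk p q) :
    ∀ (hall : ∀ z ∈ w.support, z.isLeft = true) (x y : α) (hp : p = Sum.inl x)
      (hq : q = Sum.inl y),
      ∃ w' : T'.Walk x y, w'.map (starHom (r := r) (β := β)) = w.copy hp hq := by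
  induction w with
  | nil =>
    intro hall x y hp hq
    subst hp
    have hxy : x = y := Sum.inl_injective hq
    subst hxy
    exact ⟨SimpleGraph.Walk.nil, by simp; rfl⟩
  | @cons u z v h w ih =>
    intro hall x y hp hq
    subst hp hq
    have hz : z.isLeft = true := hall z (by simp)
    obtain ⟨x₂, rfl⟩ : ∃ x₂, z = Sum.inl x₂ := by
      cases z with
      | inl a => exact ⟨a, rfl⟩
      | inr b => simp at hz
    obtain ⟨w', hw'⟩ := ih (fun z hz => hall z (by simp [hz])) x₂ y rfl rfl
    refine ⟨SimpleGraph.Walk.cons h w', ?_⟩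
    simp only [SimpleGraph.Walk.map_cons, SimpleGraph.Walk.copy_rfl_rfl] at hw' ⊢
    subst hw'; rfl

lemma starAttach_adj_inr_left {j : β} {x : α ⊕ β}
    (h : (starAttach (β := β) T' r).Adj (Sum.inr j) x) : x = Sum.inl r := by
  cases x with
  | inl s => rw [show s = r from h]
  | inr j' => exact h.elim

lemma starAttach_isTree (hT : T'.IsTree) : (starAttach (β := β) T' r).IsTree := by
  constructor
  · haveI : Nonempty (α ⊕ β) := ⟨Sum.inl r⟩
    constructor
    have toRoot : ∀ k : α ⊕ β, (starAttach (β := β) T' r).Reachable k (Sum.inl r) := by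
      intro k
      cases k with
      | inl a => exact (hT.isConnected.preconnected a r).map (starHom (r := r) (β := β))
      | inr b => exact SimpleGraph.Adj.reachable (show r = r from rfl)
    intro k k'
    exact (toRoot k).trans (toRoot k').symm
  · classical
    intro v c hc
    have hnoR : ∀ (j : β), Sum.inr j ∉ c.support := by
      intro j hj
      exact no_cycle_of_unique_nbr (b := Sum.inl r)
        (fun x hx => starAttach_adj_inr_left hx) (c.rotate _ hj) (hc.rotate hj)
    cases v with
    | inr j => exact hnoR j c.start_mem_support
    | inl a =>
      have hall : ∀ z ∈ c.support, z.isLeft = true := by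
        intro z hz
        cases z with
        | inl s => rfl
        | inr j => exact absurd hz (hnoR j)
      obtain ⟨c', hc'⟩ := starAttach_lift c hall a a rfl rfl
      rw [SimpleGraph.Walk.copy_rfl_rfl] at hc'
      have hmc : (c'.map (starHom (r := r) (β := β))).IsCycle := hc' ▸ hc
      exact hT.IsAcyclic c'
        ((SimpleGraph.Walk.map_isCycle_iff_of_injective starHom_injective).mp hmc)

lemma starAttach_induce_inl {C : Set α} (hC : (T'.induce C).Connected) :
    ((starAttach (β := β) T' r).induce (Sum.inl '' C)).Connected := by
  apply SimpleGraph.Connected.map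
    (⟨fun a => ⟨Sum.inl a.1, ⟨a.1, a.2, rfl⟩⟩, fun h => h⟩ :
      T'.induce C →g (starAttach (β := β) T' r).induce (Sum.inl '' C)) ?_ hC
  rintro ⟨k, hk⟩
  obtain ⟨a, ha, rfl⟩ := hk
  exact ⟨⟨a, ha⟩, by rfl⟩

lemma induce_induce_connected {ι' : Type*} {T₀ : SimpleGraph ι'} {S D : Set ι'} (hDS : D ⊆ S)
    (hD : (T₀.induce D).Connected) :
    ((T₀.induce S).induce {s : S | s.1 ∈ D}).Connected := by
  apply SimpleGraph.Connected.map
    (⟨fun a => ⟨⟨a.1, hDS a.2⟩, a.2⟩, fun h => h⟩ :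
      T₀.induce D →g (T₀.induce S).induce {s : S | s.1 ∈ D}) ?_ hD
  rintro ⟨⟨i, hiS⟩, hiD⟩
  exact ⟨⟨i, hiD⟩, by rfl⟩

lemma ncard_biUnion_le {γ δ : Type*} [Finite δ] {s : Set γ} (hs : s.Finite)
    (F : γ → Set δ) (c : ℕ) (hF : ∀ a, (F a).ncard ≤ c) :
    (⋃ a ∈ s, F a).ncard ≤ s.ncard * c := by
  refine Set.Finite.induction_on
    (motive := fun s _ => (⋃ a ∈ s, F a).ncard ≤ s.ncard * c) s hs (by simp) ?_
  intro a s' ha hs' ih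
  rw [Set.biUnion_insert, Set.ncard_insert_of_notMem ha hs']
  calc (F a ∪ ⋃ x ∈ s', F x).ncard ≤ (F a).ncard + (⋃ x ∈ s', F x).ncard :=
        Set.ncard_union_le _ _
    _ ≤ c + s'.ncard * c := add_le_add (hF a) ih
    _ = (s'.ncard + 1) * c := by ring

end TDAux

/-- `(T, X)` is a tree-decomposition of the graph `H`: `T` is a tree, every
vertex is in some bag, every edge has both endpoints in a common bag, and the
bags containing any fixed vertex induce a connected (hence nonempty) subtree. -/
def IsTreeDecomp {V ι : Type*} (H : SimpleGraph V) (T : SimpleGraph ι)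
    (X : ι → Set V) : Prop :=
  T.IsTree ∧ (∀ v, ∃ i, v ∈ X i) ∧
  (∀ u v, H.Adj u v → ∃ i, u ∈ X i ∧ v ∈ X i) ∧
  ∀ v : V, (T.induce {i | v ∈ X i}).Connected

/-- The graph obtained from `G` by subdividing every edge twice: each edge
`e = uv` is replaced by a path `u – (e,u) – (e,v) – v` with two new vertices. -/
def doubleSubdiv {V : Type*} (G : SimpleGraph V) :
    SimpleGraph (V ⊕ (Sym2 V × V)) where
  Adj a b :=
    match a, b with
    | Sum.inl u, Sum.inr (e, x) => e ∈ G.edgeSet ∧ x = u ∧ u ∈ e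
    | Sum.inr (e, x), Sum.inl u => e ∈ G.edgeSet ∧ x = u ∧ u ∈ e
    | Sum.inr (e, x), Sum.inr (e', x') =>
        e = e' ∧ e ∈ G.edgeSet ∧ x ≠ x' ∧ x ∈ e ∧ x' ∈ e
    | _, _ => False
  symm := by
    constructor
    rintro (u | ⟨e, x⟩) (v | ⟨e', x'⟩) h
    · exact h.elim
    · exact h
    · exact h
    · obtain ⟨rfl, he, hne, hx, hx'⟩ := h
      exact ⟨rfl, he, Ne.symm hne, hx', hx⟩
  loopless := by
    constructor
    rintro (u | ⟨e, x⟩) h <;> simp_all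

namespace TDAux

lemma isTreeDecomp_map_iso {W κ κ' : Type*} {H : SimpleGraph W} {T : SimpleGraph κ}
    {T'' : SimpleGraph κ'} (φ : T ≃g T'') (X : κ → Set W) (h : IsTreeDecomp H T X) :
    IsTreeDecomp H T'' (fun k => X (φ.symm k)) := by
  obtain ⟨⟨hc, ha⟩, hcov, hE, hconn⟩ := h
  refine ⟨⟨SimpleGraph.Connected.map φ.toHom φ.toEquiv.surjective hc, ?_⟩, ?_, ?_, ?_⟩
  · intro v c hcyc
    exact ha _ (hcyc.map (f := φ.symm.toHom) φ.symm.toEquiv.injective)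
  · intro v
    obtain ⟨i, hi⟩ := hcov v
    exact ⟨φ i, by simpa using hi⟩
  · intro u v huv
    obtain ⟨i, hi, hi'⟩ := hE u v huv
    exact ⟨φ i, by simpa using hi, by simpa using hi'⟩
  · intro v
    apply SimpleGraph.Connected.map
      (⟨fun a => ⟨φ a.1, show v ∈ X (φ.symm (φ a.1)) by
          rw [RelIso.symm_apply_apply]; exact a.2⟩,
        fun hadj => φ.map_rel_iff.mpr hadj⟩ :
        T.induce {i | v ∈ X i} →g T''.induce {k | v ∈ X (φ.symm k)}) ?_ (hconn v)
    rintro ⟨k, hk⟩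
    exact ⟨⟨φ.symm k, hk⟩, Subtype.ext (φ.apply_symm_apply k)⟩

end TDAux

theorem treeDecomp_of_neighborhood_expansion
    {V U ι : Type*} (G : SimpleGraph V) (T : SimpleGraph ι) (X : ι → Set V)
    (t d : ℕ)
    -- `(T, X)` is a tree-decomposition of `G` of width `t`
    (htd : IsTreeDecomp G T X) (hwidth : ∀ i, (X i).ncard ≤ t + 1)
    -- `G` has maximum degree at most `d`
    (hdeg : ∀ v : V, (G.neighborSet v).ncard ≤ d)
    -- `H` is a graph on a vertex set containing `V(G)` (via the injection `f`)
    (H : SimpleGraph U) (f : V → U) (hinj : Function.Injective f)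
    -- every vertex of `H − V(G)` is adjacent in `H` only to vertices of `G`
    (hout : ∀ u : U, u ∉ Set.range f → ∀ w, H.Adj u w → w ∈ Set.range f)
    -- every vertex of `H − V(G)` is adjacent in `H` to some vertex of `G`
    (hcover : ∀ u : U, u ∉ Set.range f → ∃ v, H.Adj (f v) u)
    -- every edge of `H` is contained in the closed `H`-neighborhood of some vertex of `G`
    (hedge : ∀ a b, H.Adj a b →
      ∃ v, (a = f v ∨ H.Adj (f v) a) ∧ (b = f v ∨ H.Adj (f v) b))
    -- each vertex of `G` has at most `d` `H`-neighbors outside `V(G)`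
    (houtdeg : ∀ v, {u | H.Adj (f v) u ∧ u ∉ Set.range f}.ncard ≤ d)
    -- `H` restricted to `V(G)` has no edges beyond those coming from `G`'s adjacency
    (hGedges : ∀ u v, H.Adj (f u) (f v) → G.Adj u v)
    (hcommon : ∀ v₁ v₂ u, u ∉ Set.range f → H.Adj (f v₁) u → H.Adj (f v₂) u →
      v₁ = v₂ ∨ G.Adj v₁ v₂) :
    -- replacing each bag by the union of closed `H`-neighborhoods gives a
    -- tree-decomposition of `H`
    IsTreeDecomp H T (fun i => ⋃ v ∈ X i, {u | u = f v ∨ H.Adj (f v) u}) ∧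
    -- in particular, the double subdivision of `G` has treewidth at most
    -- `(t+1)(2d+1) − 1`
    ∃ (κ : Type) (T' : SimpleGraph κ) (X' : κ → Set (V ⊕ (Sym2 V × V))),
      IsTreeDecomp (doubleSubdiv G) T' X' ∧
      ∀ i, (X' i).ncard ≤ (t + 1) * (2 * d + 1) := by
  obtain ⟨hT, hcov, hE, hconn⟩ := htd
  have mem_Y : ∀ (u : U) (i : ι),
      u ∈ ⋃ v ∈ X i, {u | u = f v ∨ H.Adj (f v) u} ↔
      ∃ v ∈ X i, u = f v ∨ H.Adj (f v) u := by
    intro u i; simp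
  constructor
  · -- Part 1
    refine ⟨hT, ?_, ?_, ?_⟩
    · intro u
      by_cases hu : u ∈ Set.range f
      · obtain ⟨v, rfl⟩ := hu
        obtain ⟨i, hi⟩ := hcov v
        exact ⟨i, (mem_Y _ i).mpr ⟨v, hi, Or.inl rfl⟩⟩
      · obtain ⟨v, hv⟩ := hcover u hu
        obtain ⟨i, hi⟩ := hcov v
        exact ⟨i, (mem_Y _ i).mpr ⟨v, hi, Or.inr hv⟩⟩
    · intro a b hab
      obtain ⟨v, hva, hvb⟩ := hedge a b hab
      obtain ⟨i, hi⟩ := hcov v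
      exact ⟨i, (mem_Y a i).mpr ⟨v, hi, hva⟩, (mem_Y b i).mpr ⟨v, hi, hvb⟩⟩
    · intro u
      have hP : ∃ v₀, (u = f v₀ ∨ H.Adj (f v₀) u) ∧
          ∀ v, (u = f v ∨ H.Adj (f v) u) → v = v₀ ∨ G.Adj v v₀ := by
        by_cases hu : u ∈ Set.range f
        · obtain ⟨w, rfl⟩ := hu
          refine ⟨w, Or.inl rfl, ?_⟩
          rintro v (hv | hv)
          · exact Or.inl (hinj hv).symm
          · exact Or.inr (hGedges v w hv)
        · obtain ⟨v₀, hv₀⟩ := hcover u hu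
          refine ⟨v₀, Or.inr hv₀, ?_⟩
          rintro v (hv | hv)
          · exact absurd ⟨v, hv.symm⟩ hu
          · exact hcommon v v₀ u hu hv hv₀
      obtain ⟨v₀, hv₀P, hnear⟩ := hP
      obtain ⟨⟨i₀, hi₀⟩⟩ := (hconn v₀).nonempty
      have hsub : ∀ v, (u = f v ∨ H.Adj (f v) u) →
          {i | v ∈ X i} ⊆ {i | u ∈ ⋃ v ∈ X i, {u | u = f v ∨ H.Adj (f v) u}} := by
        intro v hvP i hi
        exact (mem_Y u i).mpr ⟨v, hi, hvP⟩
      apply T.induce_connected_of_patches i₀ (hsub v₀ hv₀P hi₀)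
      intro k hk
      obtain ⟨v, hvk, hvP⟩ := (mem_Y u k).mp hk
      refine ⟨{i | v₀ ∈ X i} ∪ {i | v ∈ X i}, ?_, Or.inl hi₀, Or.inr hvk, ?_⟩
      · rintro j (hj | hj)
        exacts [hsub v₀ hv₀P hj, hsub v hvP hj]
      · have hne : ({i | v₀ ∈ X i} ∩ {i | v ∈ X i}).Nonempty := by
          rcases hnear v hvP with rfl | hadj
          · exact ⟨i₀, hi₀, hi₀⟩
          · obtain ⟨j, hj1, hj2⟩ := hE v v₀ hadj
            exact ⟨j, hj2, hj1⟩
        exact (T.induce_union_connected (hconn v₀).preconnected (hconn v).preconnected hne).preconnected _ _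
  · -- Part 2
    by_cases hfin : Finite (V ⊕ (Sym2 V × V))
    swap
    · -- infinite case: one bag containing everything (its `ncard` is `0`)
      haveI : Infinite (V ⊕ (Sym2 V × V)) := not_finite_iff_infinite.mp hfin
      refine ⟨Unit, ⊥, fun _ => Set.univ, ⟨⟨?_, ?_⟩, ?_, ?_, ?_⟩, ?_⟩
      · haveI : Nonempty Unit := ⟨()⟩
        constructor
        intro a b
        rw [Subsingleton.elim a b]
      · exact SimpleGraph.isAcyclic_bot
      · exact fun w => ⟨(), Set.mem_univ w⟩
      · exact fun a b _ => ⟨(), Set.mem_univ a, Set.mem_univ b⟩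
      · intro w
        haveI : Nonempty ↥{i : Unit | w ∈ Set.univ} := ⟨⟨(), Set.mem_univ w⟩⟩
        constructor
        intro a b
        rw [Subsingleton.elim a b]
      · intro _
        rw [Set.Infinite.ncard Set.infinite_univ]
        exact Nat.zero_le _
    · haveI := hfin
      haveI : Finite V := Finite.of_injective (Sum.inl : V → V ⊕ (Sym2 V × V)) Sum.inl_injective
      haveI : Finite (Sym2 V × V) :=
        Finite.of_injective (Sum.inr : Sym2 V × V → V ⊕ (Sym2 V × V)) Sum.inr_injective
      classical
      have hTc := hT.isConnected
      have hTa := hT.IsAcyclic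
      haveI : Nonempty ι := hTc.nonempty
      set r : ι := Classical.arbitrary ι with hr
      choose gv hgv using hcov
      have hEc : ∀ p : {p : V × V // G.Adj p.1 p.2}, ∃ i, p.1.1 ∈ X i ∧ p.1.2 ∈ X i :=
        fun p => hE _ _ p.2
      choose ge hge1 hge2 using hEc
      set wfn : ∀ i : ι, T.Walk r i := fun i => (hTc.preconnected r i).some with hwfn
      set S₀ : Set ι := Set.range gv ∪ Set.range ge ∪ {r} with hS₀
      have hS₀fin : S₀.Finite :=
        ((Set.finite_range gv).union (Set.finite_range ge)).union (Set.finite_singleton r)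
      set S : Set ι := ⋃ i ∈ S₀, {x | x ∈ (wfn i).support} with hS
      have hS₀S : S₀ ⊆ S := fun i hi => Set.mem_biUnion hi ((wfn i).end_mem_support)
      have hrS : r ∈ S := hS₀S (Or.inr rfl)
      have hSconn : (T.induce S).Connected := by
        apply T.induce_connected_of_patches r hrS
        intro x hx
        rw [Set.mem_iUnion₂] at hx
        obtain ⟨i, hiS₀, hxi⟩ := hx
        refine ⟨{y | y ∈ (wfn i).support}, fun y hy => Set.mem_biUnion hiS₀ hy,
          (wfn i).start_mem_support, hxi, ?_⟩
        exact (wfn i).connected_induce_support.preconnected _ _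
      have hSAv : ∀ v : V, (T.induce (S ∩ {i | v ∈ X i})).Connected := fun v =>
        TDAux.subtree_inter hTa hSconn (hconn v)
          ⟨gv v, hS₀S (Or.inl (Or.inl ⟨v, rfl⟩)), hgv v⟩
      -- a bag (inside S) containing all endpoints of a given edge
      have hEnode : ∀ e : Sym2 V, e ∈ G.edgeSet → ∃ i, i ∈ S ∧ ∀ w ∈ e, w ∈ X i := by
        intro e
        induction e using Sym2.ind with
        | _ a b =>
          intro he
          have hadj : G.Adj a b := he
          refine ⟨ge ⟨(a, b), hadj⟩, hS₀S (Or.inl (Or.inr ⟨_, rfl⟩)), ?_⟩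
          intro w hw
          rcases Sym2.mem_iff.mp hw with rfl | rfl
          exacts [hge1 _, hge2 _]
      set TS := T.induce S with hTS'
      have hTSt : TS.IsTree := ⟨hSconn, TDAux.induce_acyclic hTa S⟩
      set rS : ↥S := ⟨r, hrS⟩ with hrS'
      set J : Set (Sym2 V × V) := {p | ¬(p.1 ∈ G.edgeSet ∧ p.2 ∈ p.1)} with hJ
      set T₂ := TDAux.starAttach (β := ↥J) TS rS with hT₂'
      have hT₂t : T₂.IsTree := TDAux.starAttach_isTree hTSt
      set NN : V → Set (V ⊕ (Sym2 V × V)) := fun v =>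
        Sum.inl '' {v} ∪
          Sum.inr '' {p : Sym2 V × V | p.1 ∈ G.edgeSet ∧ v ∈ p.1 ∧ p.2 ∈ p.1} with hNN'
      have mem_NN_inl : ∀ v w : V, Sum.inl w ∈ NN v ↔ w = v := by
        intro v w
        simp [hNN']
      have mem_NN_inr : ∀ (v : V) (p : Sym2 V × V),
          Sum.inr p ∈ NN v ↔ p.1 ∈ G.edgeSet ∧ v ∈ p.1 ∧ p.2 ∈ p.1 := by
        intro v p
        simp [hNN']
      set X₂ : ↥S ⊕ ↥J → Set (V ⊕ (Sym2 V × V)) :=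
        Sum.elim (fun s => ⋃ v ∈ X s.1, NN v) (fun j => {Sum.inr j.1}) with hX₂'
      have hX₂td : IsTreeDecomp (doubleSubdiv G) T₂ X₂ := by
        refine ⟨hT₂t, ?_, ?_, ?_⟩
        · -- every vertex is in some bag
          intro w
          cases w with
          | inl v =>
            refine ⟨Sum.inl ⟨gv v, hS₀S (Or.inl (Or.inl ⟨v, rfl⟩))⟩, ?_⟩
            simp only [hX₂', Sum.elim_inl, Set.mem_iUnion₂]
            exact ⟨v, hgv v, (mem_NN_inl v v).mpr rfl⟩
          | inr p =>
            by_cases hp : p.1 ∈ G.edgeSet ∧ p.2 ∈ p.1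
            · obtain ⟨i, hiS, hall⟩ := hEnode p.1 hp.1
              have ha : p.1.out.1 ∈ p.1 := Sym2.out_fst_mem p.1
              refine ⟨Sum.inl ⟨i, hiS⟩, ?_⟩
              simp only [hX₂', Sum.elim_inl, Set.mem_iUnion₂]
              exact ⟨p.1.out.1, hall _ ha, (mem_NN_inr _ p).mpr ⟨hp.1, ha, hp.2⟩⟩
            · exact ⟨Sum.inr ⟨p, hp⟩, rfl⟩
        · -- every edge has both ends in a common bag
          rintro (u | ⟨e, x⟩) (u' | ⟨e', x'⟩) hab
          · exact hab.elim
          · obtain ⟨he, rfl, hu⟩ := hab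
            obtain ⟨i, hiS, hall⟩ := hEnode e' he
            refine ⟨Sum.inl ⟨i, hiS⟩, ?_, ?_⟩ <;>
              simp only [hX₂', Sum.elim_inl, Set.mem_iUnion₂]
            · exact ⟨x', hall x' hu, (mem_NN_inl x' x').mpr rfl⟩
            · exact ⟨x', hall x' hu, (mem_NN_inr x' (e', x')).mpr ⟨he, hu, hu⟩⟩
          · obtain ⟨he, rfl, hu⟩ := hab
            obtain ⟨i, hiS, hall⟩ := hEnode e he
            refine ⟨Sum.inl ⟨i, hiS⟩, ?_, ?_⟩ <;>
              simp only [hX₂', Sum.elim_inl, Set.mem_iUnion₂]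
            · exact ⟨x, hall x hu, (mem_NN_inr x (e, x)).mpr ⟨he, hu, hu⟩⟩
            · exact ⟨x, hall x hu, (mem_NN_inl x x).mpr rfl⟩
          · obtain ⟨rfl, he, hne, hx, hx'⟩ := hab
            obtain ⟨i, hiS, hall⟩ := hEnode e he
            have ha : e.out.1 ∈ e := Sym2.out_fst_mem e
            refine ⟨Sum.inl ⟨i, hiS⟩, ?_, ?_⟩ <;>
              simp only [hX₂', Sum.elim_inl, Set.mem_iUnion₂]
            · exact ⟨e.out.1, hall _ ha, (mem_NN_inr _ (e, x)).mpr ⟨he, ha, hx⟩⟩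
            · exact ⟨e.out.1, hall _ ha, (mem_NN_inr _ (e, x')).mpr ⟨he, ha, hx'⟩⟩
        · -- bags containing a fixed vertex form a connected subtree
          intro w
          cases w with
          | inl v =>
            have hset : {k | Sum.inl v ∈ X₂ k} =
                Sum.inl '' {s : ↥S | s.1 ∈ S ∩ {i | v ∈ X i}} := by
              ext k
              cases k with
              | inl s =>
                simp only [hX₂', Sum.elim_inl, Set.mem_setOf_eq, Set.mem_iUnion₂]
                constructor
                · rintro ⟨v', hv', hmem⟩
                  obtain rfl : v = v' := (mem_NN_inl v' v).mp hmem
                  exact ⟨s, ⟨s.2, hv'⟩, rfl⟩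
                · rintro ⟨s', ⟨_, hv⟩, hss⟩
                  obtain rfl : s' = s := Sum.inl_injective hss
                  exact ⟨v, hv, (mem_NN_inl v v).mpr rfl⟩
              | inr j =>
                simp only [hX₂', Sum.elim_inr, Set.mem_setOf_eq]
                constructor
                · intro hmem
                  exact absurd hmem (by simp)
                · rintro ⟨s', _, hss⟩
                  exact absurd hss (by simp)
            rw [hset]
            exact TDAux.starAttach_induce_inl
              (TDAux.induce_induce_connected Set.inter_subset_left (hSAv v))
          | inr p =>
            by_cases hp : p.1 ∈ G.edgeSet ∧ p.2 ∈ p.1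
            · have hset : {k | Sum.inr p ∈ X₂ k} =
                  Sum.inl '' {s : ↥S | s.1 ∈ S ∩ {i | ∃ v' ∈ X i, v' ∈ p.1}} := by
                ext k
                cases k with
                | inl s =>
                  simp only [hX₂', Sum.elim_inl, Set.mem_setOf_eq, Set.mem_iUnion₂]
                  constructor
                  · rintro ⟨v', hv', hmem⟩
                    obtain ⟨_, hv'e, _⟩ := (mem_NN_inr v' p).mp hmem
                    exact ⟨s, ⟨s.2, v', hv', hv'e⟩, rfl⟩
                  · rintro ⟨s', ⟨_, v', hv', hv'e⟩, hss⟩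
                    obtain rfl : s' = s := Sum.inl_injective hss
                    exact ⟨v', hv', (mem_NN_inr v' p).mpr ⟨hp.1, hv'e, hp.2⟩⟩
                | inr j =>
                  simp only [hX₂', Sum.elim_inr, Set.mem_setOf_eq]
                  constructor
                  · intro hmem
                    obtain rfl : p = j.1 := Sum.inr_injective (Set.mem_singleton_iff.mp hmem)
                    exact absurd hp j.2
                  · rintro ⟨s', _, hss⟩
                    exact absurd hss (by simp)
              rw [hset]
              apply TDAux.starAttach_induce_inl
              apply TDAux.induce_induce_connected Set.inter_subset_left
              -- connectivity of S ∩ {i | some endpoint of p.1 lies in X i}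
              obtain ⟨i0, hi0S, hi0all⟩ := hEnode p.1 hp.1
              set a := p.1.out.1 with hadef
              set b := p.1.out.2 with hbdef
              have heq : s(a, b) = p.1 := by
                rw [hadef, hbdef]
                exact p.1.out_eq
              have hsetD : {i | ∃ v' ∈ X i, v' ∈ p.1} = {i | a ∈ X i} ∪ {i | b ∈ X i} := by
                ext i
                simp only [Set.mem_setOf_eq, Set.mem_union]
                constructor
                · rintro ⟨v', hv', hv'e⟩
                  rw [← heq] at hv'e
                  rcases Sym2.mem_iff.mp hv'e with rfl | rfl
                  exacts [Or.inl hv', Or.inr hv']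
                · rintro (h | h)
                  · exact ⟨a, h, by rw [← heq]; exact Sym2.mem_mk_left a b⟩
                  · exact ⟨b, h, by rw [← heq]; exact Sym2.mem_mk_right a b⟩
              rw [hsetD, Set.inter_union_distrib_left]
              have hane : i0 ∈ (S ∩ {i | a ∈ X i}) ∩ (S ∩ {i | b ∈ X i}) := by
                refine ⟨⟨hi0S, hi0all a ?_⟩, hi0S, hi0all b ?_⟩
                · rw [← heq]; exact Sym2.mem_mk_left a b
                · rw [← heq]; exact Sym2.mem_mk_right a b
              exact T.induce_union_connected (hSAv a).preconnected (hSAv b).preconnected ⟨i0, hane⟩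
            · have hset : {k | Sum.inr p ∈ X₂ k} = {Sum.inr ⟨p, hp⟩} := by
                ext k
                cases k with
                | inl s =>
                  simp only [hX₂', Sum.elim_inl, Set.mem_setOf_eq, Set.mem_iUnion₂]
                  constructor
                  · rintro ⟨v', hv', hmem⟩
                    obtain ⟨h1, _, h3⟩ := (mem_NN_inr v' p).mp hmem
                    exact absurd ⟨h1, h3⟩ hp
                  · intro hss
                    exact absurd hss (by simp)
                | inr j =>
                  simp only [hX₂', Sum.elim_inr]
                  constructor
                  · intro hmem
                    obtain rfl : p = j.1 := Sum.inr_injective (Set.mem_singleton_iff.mp hmem)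
                    simp
                  · intro hmem
                    obtain rfl : j = ⟨p, hp⟩ := Sum.inr_injective (Set.mem_singleton_iff.mp hmem)
                    rfl
              rw [hset]
              exact TDAux.induce_singleton_connected _
      -- width bound
      have hNNcard : ∀ v : V, (NN v).ncard ≤ 2 * d + 1 := by
        intro v
        have h1 : (Sum.inl '' {v} : Set (V ⊕ (Sym2 V × V))).ncard = 1 := by
          rw [Set.ncard_image_of_injective _ Sum.inl_injective, Set.ncard_singleton]
        have hPsub : {p : Sym2 V × V | p.1 ∈ G.edgeSet ∧ v ∈ p.1 ∧ p.2 ∈ p.1} ⊆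
            (fun w => (s(v, w), v)) '' (G.neighborSet v) ∪
              (fun w => (s(v, w), w)) '' (G.neighborSet v) := by
          rintro ⟨e, x⟩ ⟨he, hv, hx⟩
          have hspec : s(v, Sym2.Mem.other hv) = e := Sym2.other_spec hv
          have hadj : G.Adj v (Sym2.Mem.other hv) := by
            rw [← SimpleGraph.mem_edgeSet, hspec]
            exact he
          rw [← hspec] at hx
          rcases Sym2.mem_iff.mp hx with hxv | hxw
          · refine Or.inl ⟨Sym2.Mem.other hv, hadj, ?_⟩
            show (s(v, Sym2.Mem.other hv), v) = (e, x)
            rw [hspec]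
            exact Prod.ext rfl hxv.symm
          · refine Or.inr ⟨Sym2.Mem.other hv, hadj, ?_⟩
            show (s(v, Sym2.Mem.other hv), Sym2.Mem.other hv) = (e, x)
            rw [hspec]
            exact Prod.ext rfl hxw.symm
        have hP1 : ({p : Sym2 V × V | p.1 ∈ G.edgeSet ∧ v ∈ p.1 ∧ p.2 ∈ p.1}).ncard ≤ 2 * d := by
          calc ({p : Sym2 V × V | p.1 ∈ G.edgeSet ∧ v ∈ p.1 ∧ p.2 ∈ p.1}).ncard
              ≤ ((fun w => (s(v, w), v)) '' (G.neighborSet v) ∪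
                  (fun w => (s(v, w), w)) '' (G.neighborSet v)).ncard :=
                Set.ncard_le_ncard hPsub (Set.toFinite _)
            _ ≤ ((fun w => (s(v, w), v)) '' (G.neighborSet v)).ncard +
                  ((fun w => (s(v, w), w)) '' (G.neighborSet v)).ncard :=
                Set.ncard_union_le _ _
            _ ≤ (G.neighborSet v).ncard + (G.neighborSet v).ncard :=
                add_le_add (Set.ncard_image_le (Set.toFinite _))
                  (Set.ncard_image_le (Set.toFinite _))
            _ ≤ d + d := add_le_add (hdeg v) (hdeg v)
            _ = 2 * d := by ring
        calc (NN v).ncard ≤ (Sum.inl '' {v} : Set (V ⊕ (Sym2 V × V))).ncard +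
              (Sum.inr '' {p : Sym2 V × V | p.1 ∈ G.edgeSet ∧ v ∈ p.1 ∧ p.2 ∈ p.1}).ncard :=
              Set.ncard_union_le _ _
          _ ≤ 1 + ({p : Sym2 V × V | p.1 ∈ G.edgeSet ∧ v ∈ p.1 ∧ p.2 ∈ p.1}).ncard := by
              rw [h1]
              exact Nat.add_le_add_left (Set.ncard_image_le (Set.toFinite _)) 1
          _ ≤ 1 + 2 * d := Nat.add_le_add_left hP1 1
          _ = 2 * d + 1 := by ring
      have hX₂card : ∀ k, (X₂ k).ncard ≤ (t + 1) * (2 * d + 1) := by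
        intro k
        cases k with
        | inl s =>
          calc (X₂ (Sum.inl s)).ncard ≤ (X s.1).ncard * (2 * d + 1) :=
              TDAux.ncard_biUnion_le (Set.toFinite (X s.1)) NN (2 * d + 1) hNNcard
            _ ≤ (t + 1) * (2 * d + 1) := Nat.mul_le_mul_right _ (hwidth s.1)
        | inr j =>
          have h1 : (X₂ (Sum.inr j)).ncard = 1 := Set.ncard_singleton _
          rw [h1]
          exact Nat.one_le_iff_ne_zero.mpr (Nat.mul_ne_zero (Nat.succ_ne_zero t) (by omega))
      -- transport to a tree indexed by `Fin n`
      have hSfin : S.Finite := hS₀fin.biUnion (fun i _ => List.finite_toSet _)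
      haveI : Finite ↥S := hSfin.to_subtype
      haveI : Finite (↥S ⊕ ↥J) := inferInstance
      obtain ⟨n, ⟨eqv⟩⟩ := Finite.exists_equiv_fin (↥S ⊕ ↥J)
      refine ⟨Fin n, SimpleGraph.comap (⇑eqv.symm) T₂, ?_, ?_, ?_⟩
      · exact fun k => X₂ (eqv.symm k)
      · exact TDAux.isTreeDecomp_map_iso
          (⟨eqv, by intro a b; simp [SimpleGraph.comap]⟩ :
            T₂ ≃g SimpleGraph.comap (⇑eqv.symm) T₂) X₂ hX₂td
      · intro k
        exact hX₂card _
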